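/- Every matrix in the 6-dimensional space E_IV has rank at most 4, and some matrix in E_IV has rank exactly 4; that is, E_IV is a space of bounded rank 4. -/

import Mathlib

open Matrix

/-- Case (IV) of the main theorem: for `a = (a1,…,a6) ∈ ℂ^6`, the matrix `M_IV(a)`. -/
noncomputable def MIV (a : Fin 6 → ℂ) : Matrix (Fin 6) (Fin 6) ℂ :=
  !![a 0, a 1, 0, 0, -a 4, -a 5;
     0, a 0, 0, 0, 0, -a 4;
     0, 0, a 0, a 1, a 2, a 3;
     0, 0, 0, a 0, 0, a 2;
     a 2, a 3, a 4, a 5, 0, 0;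
     0, a 2, 0, a 4, 0, 0]

@[simp] lemma vec6_eval_5 {α : Type*} (x0 x1 x2 x3 x4 x5 : α) :
    ![x0, x1, x2, x3, x4, x5] 5 = x5 := rfl

lemma zero_vec6 : (0 : Fin 6 → ℂ) = ![0, 0, 0, 0, 0, 0] := by
  ext i; fin_cases i <;> rfl

/-- If the transpose of a `6 × 6` matrix kills two linearly independent vectors,
the matrix has rank at most `4`. -/
lemma rank_le_four_of_two_ker (M : Matrix (Fin 6) (Fin 6) ℂ) (u v : Fin 6 → ℂ)
    (hu : Mᵀ *ᵥ u = 0) (hv : Mᵀ *ᵥ v = 0)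
    (hind : LinearIndependent ℂ ![u, v]) : M.rank ≤ 4 := by
  rw [← Matrix.rank_transpose]
  have hadd := LinearMap.finrank_range_add_finrank_ker (Mᵀ).mulVecLin
  have hdim : Module.finrank ℂ (Fin 6 → ℂ) = 6 := by simp
  have hmem : ∀ i : Fin 2, ![u, v] i ∈ LinearMap.ker (Mᵀ).mulVecLin := by
    intro i
    fin_cases i
    · exact LinearMap.mem_ker.mpr hu
    · exact LinearMap.mem_ker.mpr hv
  have hker : 2 ≤ Module.finrank ℂ (LinearMap.ker (Mᵀ).mulVecLin) := by
    have hind' : LinearIndependent ℂ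
        (fun i : Fin 2 => (⟨![u, v] i, hmem i⟩ : LinearMap.ker (Mᵀ).mulVecLin)) := by
      apply LinearIndependent.of_comp (LinearMap.ker (Mᵀ).mulVecLin).subtype
      exact hind
    simpa using hind'.fintype_card_le_finrank
  have : Matrix.rank Mᵀ = Module.finrank ℂ (LinearMap.range (Mᵀ).mulVecLin) := rfl
  omega

set_option maxHeartbeats 1000000 in
/-- Every matrix in the space `E_IV = {M_IV(a) : a ∈ ℂ^6}` has rank at most `4`,
and some matrix in `E_IV` has rank exactly `4`: `E_IV` is of bounded rank `4`. -/
theorem stmt2 :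
    (∀ a : Fin 6 → ℂ, (MIV a).rank ≤ 4) ∧ (∃ a : Fin 6 → ℂ, (MIV a).rank = 4) := by
  constructor
  · intro a
    by_cases h0 : a 0 ≠ 0
    · apply rank_le_four_of_two_ker (MIV a)
        ![a 0 * a 2, a 0 * a 3 - a 1 * a 2, a 0 * a 4, a 0 * a 5 - a 1 * a 4, -(a 0 * a 0), 0]
        ![0, a 2, 0, a 4, 0, -(a 0)]
      · rw [Matrix.mulVec_transpose, zero_vec6]
        simp only [MIV, Matrix.vecMul, dotProduct, Fin.sum_univ_six]
        ext j
        fin_cases j <;> simp <;> ring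
      · rw [Matrix.mulVec_transpose, zero_vec6]
        simp only [MIV, Matrix.vecMul, dotProduct, Fin.sum_univ_six]
        ext j
        fin_cases j <;> simp <;> ring
      · rw [linearIndependent_fin2]
        simp only [Matrix.cons_val_zero, Matrix.cons_val_one, Matrix.head_cons]
        constructor
        · intro h
          exact h0 (by simpa using congrFun h 5)
        · intro c h
          have h4' := congrFun h 4
          simp only [Pi.smul_apply, smul_eq_mul] at h4'
          simp at h4'
          exact h0 (by simpa [zero_eq_neg, mul_self_eq_zero] using h4')
    · push_neg at h0
      by_cases h2 : a 2 ≠ 0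
      · apply rank_le_four_of_two_ker (MIV a)
          ![a 2, a 3, a 4, a 5, 0, -(a 1)]
          ![0, a 2, 0, a 4, 0, -(a 0)]
        · rw [Matrix.mulVec_transpose, zero_vec6]
          simp only [MIV, Matrix.vecMul, dotProduct, Fin.sum_univ_six]
          ext j
          fin_cases j <;> simp [h0] <;> ring
        · rw [Matrix.mulVec_transpose, zero_vec6]
          simp only [MIV, Matrix.vecMul, dotProduct, Fin.sum_univ_six]
          ext j
          fin_cases j <;> simp [h0] <;> ring
        · rw [linearIndependent_fin2]
          simp only [Matrix.cons_val_zero, Matrix.cons_val_one, Matrix.head_cons]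
          constructor
          · intro h
            exact h2 (by simpa using congrFun h 1)
          · intro c h
            have h0' := congrFun h 0
            simp only [Pi.smul_apply, smul_eq_mul] at h0'
            simp at h0'
            exact h2 h0'.symm
      · push_neg at h2
        by_cases h4 : a 4 ≠ 0
        · apply rank_le_four_of_two_ker (MIV a)
            ![0, a 3, a 4, 0, 0, -(a 1)]
            ![0, 0, 0, 1, 0, 0]
          · rw [Matrix.mulVec_transpose, zero_vec6]
            simp only [MIV, Matrix.vecMul, dotProduct, Fin.sum_univ_six]
            ext j
            fin_cases j <;> simp [h0, h2] <;> ring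
          · rw [Matrix.mulVec_transpose, zero_vec6]
            simp only [MIV, Matrix.vecMul, dotProduct, Fin.sum_univ_six]
            ext j
            fin_cases j <;> simp [h0, h2] <;> ring
          · rw [linearIndependent_fin2]
            simp only [Matrix.cons_val_zero, Matrix.cons_val_one, Matrix.head_cons]
            constructor
            · intro h
              simpa using congrFun h 3
            · intro c h
              have h2' := congrFun h 2
              simp only [Pi.smul_apply, smul_eq_mul] at h2'
              simp at h2'
              exact h4 h2'.symm
        · push_neg at h4
          apply rank_le_four_of_two_ker (MIV a)
            ![0, 1, 0, 0, 0, 0]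
            ![0, 0, 0, 1, 0, 0]
          · rw [Matrix.mulVec_transpose, zero_vec6]
            simp only [MIV, Matrix.vecMul, dotProduct, Fin.sum_univ_six]
            ext j
            fin_cases j <;> simp [h0, h2, h4] <;> ring
          · rw [Matrix.mulVec_transpose, zero_vec6]
            simp only [MIV, Matrix.vecMul, dotProduct, Fin.sum_univ_six]
            ext j
            fin_cases j <;> simp [h0, h2, h4] <;> ring
          · rw [linearIndependent_fin2]
            simp only [Matrix.cons_val_zero, Matrix.cons_val_one, Matrix.head_cons]
            constructor
            · intro h
              simpa using congrFun h 3
            · intro c h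
              have h1' := congrFun h 1
              simp only [Pi.smul_apply, smul_eq_mul] at h1'
              simp at h1'
  · refine ⟨![1, 0, 0, 0, 0, 0], ?_⟩
    have hdiag : MIV ![1, 0, 0, 0, 0, 0] = Matrix.diagonal ![1, 1, 1, 1, 0, 0] := by
      ext i j
      fin_cases i <;> fin_cases j <;>
        simp [MIV, Matrix.diagonal, Matrix.vecHead, Matrix.vecTail] <;> rfl
    rw [hdiag, Matrix.rank_diagonal]
    have he : ∀ i : Fin 6, (![1,1,1,1,0,0] i ≠ (0:ℂ)) ↔ i ∈ ({0,1,2,3} : Finset (Fin 6)) := by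
      intro i; fin_cases i <;> simp
    rw [Fintype.card_congr (Equiv.subtypeEquivRight he)]
    decide
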